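/- (One-dimensional variational characterization of σ₁ of the geodesic ball, stated after (2.1)) Let κ ≤ 0, let n ≥ 2 be an integer, let F solve the ODE of the paper with F(0) = 0, F'(0) = 1, and let R > 0. For every continuously differentiable function φ : [0,R] → ℝ with φ(0) = 0 and φ(R) ≠ 0, one has ∫₀^R ( φ'(r)² + (n−1) φ(r)²/sn_κ(r)² ) sn_κ(r)^{n−1} dr ≥ (F'(R)/F(R)) · φ(R)² sn_κ(R)^{n−1}, with equality when φ = F. In particular F'(R)/F(R) is the minimal value of the quotient Q(φ) = ∫₀^R (φ'² + (n−1)φ²/sn_κ²) sn_κ^{n−1} dr / ( φ(R)² sn_κ(R)^{n−1} ) over such φ. -/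

import Mathlib

open Set Filter Topology MeasureTheory intervalIntegral

noncomputable def snk (κ : ℝ) (t : ℝ) : ℝ :=
  if κ = 0 then t else Real.sinh (Real.sqrt (-κ) * t) / Real.sqrt (-κ)

noncomputable def snk' (κ : ℝ) (t : ℝ) : ℝ :=
  if κ = 0 then 1 else Real.cosh (Real.sqrt (-κ) * t)

lemma sqrt_neg_pos {κ : ℝ} (hκ : κ ≤ 0) (h : κ ≠ 0) : 0 < Real.sqrt (-κ) :=
  Real.sqrt_pos.2 (by linarith [lt_of_le_of_ne hκ h])

lemma snk_zero (κ : ℝ) : snk κ 0 = 0 := by unfold snk; split <;> simp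

lemma hasDerivAt_snk (κ : ℝ) (t : ℝ) (hκ : κ ≤ 0) : HasDerivAt (snk κ) (snk' κ t) t := by
  unfold snk snk'
  split_ifs with h
  · exact hasDerivAt_id' t
  · have ha := sqrt_neg_pos hκ h
    have h1 : HasDerivAt (fun t : ℝ => Real.sqrt (-κ) * t) (Real.sqrt (-κ)) t := by
      simpa using (hasDerivAt_id t).const_mul (Real.sqrt (-κ))
    have h2 := ((Real.hasDerivAt_sinh (Real.sqrt (-κ) * t)).comp t h1).div_const (Real.sqrt (-κ))
    refine h2.congr_deriv ?_
    field_simp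

lemma snk_pos {κ : ℝ} (hκ : κ ≤ 0) {t : ℝ} (ht : 0 < t) : 0 < snk κ t := by
  unfold snk; split_ifs with h
  · exact ht
  · have ha := sqrt_neg_pos hκ h
    exact div_pos (Real.sinh_pos_iff.2 (by positivity)) ha

lemma le_snk {κ : ℝ} (hκ : κ ≤ 0) {t : ℝ} (ht : 0 ≤ t) : t ≤ snk κ t := by
  unfold snk; split_ifs with h
  · exact le_rfl
  · have ha := sqrt_neg_pos hκ h
    rw [le_div_iff₀ ha]
    rcases eq_or_lt_of_le ht with rfl | ht'
    · simp
    · exact le_of_lt (by rw [mul_comm]; exact Real.self_lt_sinh_iff.2 (by positivity))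

lemma snk_mono {κ : ℝ} (hκ : κ ≤ 0) {s t : ℝ} (h : s ≤ t) : snk κ s ≤ snk κ t := by
  unfold snk; split_ifs with h0
  · exact h
  · have ha := sqrt_neg_pos hκ h0
    have : Real.sinh (Real.sqrt (-κ) * s) ≤ Real.sinh (Real.sqrt (-κ) * t) :=
      Real.sinh_le_sinh.2 (by nlinarith)
    exact by gcongr

lemma snk_doubling {κ : ℝ} (hκ : κ ≤ 0) (r : ℝ) :
    snk κ (2 * r) = 2 * Real.cosh (Real.sqrt (-κ) * r) * snk κ r := by
  unfold snk; split_ifs with h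
  · subst h; norm_num
  · have ha := sqrt_neg_pos hκ h
    have : Real.sqrt (-κ) * (2 * r) = 2 * (Real.sqrt (-κ) * r) := by ring
    rw [this, Real.sinh_two_mul]
    field_simp

lemma one_le_snk' (κ : ℝ) (t : ℝ) : 1 ≤ snk' κ t := by
  unfold snk'; split_ifs
  · exact le_rfl
  · exact Real.one_le_cosh _

section Faux
variable {F : ℝ → ℝ}

lemma hFd (hF2 : ContDiffOn ℝ 2 F (Ioi 0)) {r : ℝ} (hr : 0 < r) :
    HasDerivAt F (deriv F r) r :=
  (((hF2.differentiableOn (by norm_num)) r hr).differentiableAt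
    (Ioi_mem_nhds hr)).hasDerivAt

lemma hF'cont (hF2 : ContDiffOn ℝ 2 F (Ioi 0)) : ContinuousOn (deriv F) (Ioi 0) :=
  hF2.continuousOn_deriv_of_isOpen isOpen_Ioi (by norm_num)

lemma hFd2 (hF2 : ContDiffOn ℝ 2 F (Ioi 0)) {r : ℝ} (hr : 0 < r) :
    HasDerivAt (deriv F) (deriv (deriv F) r) r := by
  have h : ContDiffOn ℝ 1 (deriv F) (Ioi 0) := by
    exact hF2.deriv_of_isOpen (m := 1) isOpen_Ioi (by norm_num)
  exact (((h.differentiableOn (by norm_num)) r hr).differentiableAt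
    (Ioi_mem_nhds hr)).hasDerivAt

/-- near 0 the function is comparable to t. -/
lemma F_slope (hF0 : F 0 = 0) (hF'0 : HasDerivWithinAt F 1 (Ici 0) 0) :
    ∃ r₁ > 0, ∀ t ∈ Ioc (0:ℝ) r₁, t/2 ≤ F t ∧ F t ≤ 2*t := by
  have h := hasDerivWithinAt_iff_tendsto_slope.1 hF'0
  have hset : (Ici (0:ℝ)) \ {0} = Ioi 0 := by
    ext x; simp [mem_Ioi, mem_Ici, lt_iff_le_and_ne, eq_comm, and_comm]
  rw [hset] at h
  have h2 : ∀ᶠ t in 𝓝[>] (0:ℝ), slope F 0 t ∈ Ioo (1/2 : ℝ) 2 :=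
    h (Ioo_mem_nhds (by norm_num) (by norm_num))
  rw [eventually_nhdsWithin_iff] at h2
  rcases Metric.eventually_nhds_iff.1 h2 with ⟨ε, hε, hball⟩
  refine ⟨ε/2, by positivity, fun t ht => ?_⟩
  have hd : dist t (0:ℝ) < ε := by
    rw [Real.dist_eq, sub_zero, abs_of_pos ht.1]; linarith [ht.2]
  have hmem := hball hd ht.1
  have h0 : slope F 0 t = F t / t := by rw [slope_def_field]; rw [hF0]; ring_nf
  rw [h0] at hmem
  have hl := (lt_div_iff₀ ht.1).1 hmem.1
  have hr := (div_lt_iff₀ ht.1).1 hmem.2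
  constructor <;> linarith

end Faux

lemma v_hasDeriv {κ : ℝ} (hκ : κ ≤ 0) {m : ℕ} (hm : 1 ≤ m) {F : ℝ → ℝ}
    (hF2 : ContDiffOn ℝ 2 F (Ioi 0))
    (hODE' : ∀ r > 0, deriv (deriv F) r
      = (m:ℝ) / snk κ r ^ 2 * F r - (m:ℝ) * (snk' κ r / snk κ r) * deriv F r)
    {r : ℝ} (hr : 0 < r) :
    HasDerivAt (fun t => deriv F t * snk κ t ^ m)
      ((m:ℝ) * F r * snk κ r ^ m / snk κ r ^ 2) r := by
  have h1 := (hFd2 hF2 hr).mul ((hasDerivAt_snk κ r hκ).pow m)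
  refine h1.congr_deriv ?_
  have hs0 : snk κ r ≠ 0 := (snk_pos hκ hr).ne'
  have hpow : snk κ r ^ m = snk κ r ^ (m-1) * snk κ r := by
    rw [← pow_succ]; congr 1; omega
  have hpow' : snk κ r ^ (m-1) = snk κ r ^ m / snk κ r := by
    rw [hpow]; field_simp
  rw [Pi.pow_apply, hODE' r hr, hpow']
  field_simp
  ring

lemma v_mono {κ : ℝ} (hκ : κ ≤ 0) {m : ℕ} (hm : 1 ≤ m) {F : ℝ → ℝ}
    (hF2 : ContDiffOn ℝ 2 F (Ioi 0))
    (hODE' : ∀ r > 0, deriv (deriv F) r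
      = (m:ℝ) / snk κ r ^ 2 * F r - (m:ℝ) * (snk' κ r / snk κ r) * deriv F r)
    (hFpos : ∀ r > 0, 0 < F r)
    {x y : ℝ} (hx : 0 < x) (hxy : x ≤ y) :
    deriv F x * snk κ x ^ m ≤ deriv F y * snk κ y ^ m := by
  rcases eq_or_lt_of_le hxy with rfl | hlt
  · exact le_rfl
  have key : MonotoneOn (fun t => deriv F t * snk κ t ^ m) (Icc x y) := by
    apply monotoneOn_of_deriv_nonneg (convex_Icc x y)
    · intro t ht
      exact (v_hasDeriv hκ hm hF2 hODE' (lt_of_lt_of_le hx ht.1)).continuousAt.continuousWithinAt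
    · intro t ht
      rw [interior_Icc] at ht
      exact (v_hasDeriv hκ hm hF2 hODE' (lt_of_lt_of_le hx ht.1.le)).differentiableAt.differentiableWithinAt
    · intro t ht
      rw [interior_Icc] at ht
      have htp : 0 < t := lt_of_lt_of_le hx ht.1.le
      rw [(v_hasDeriv hκ hm hF2 hODE' htp).deriv]
      have h1 := (hFpos t htp).le
      have h2 := (snk_pos hκ htp).le
      positivity
  exact key (left_mem_Icc.2 hxy) (right_mem_Icc.2 hxy) hxy

lemma derivF_bound {κ : ℝ} (hκ : κ ≤ 0) {m : ℕ} (hm : 1 ≤ m) {F : ℝ → ℝ}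
    (hFc : ContinuousOn F (Ici 0))
    (hF2 : ContDiffOn ℝ 2 F (Ioi 0))
    (hF0 : F 0 = 0) (hF'0 : HasDerivWithinAt F 1 (Ici 0) 0)
    (hODE' : ∀ r > 0, deriv (deriv F) r
      = (m:ℝ) / snk κ r ^ 2 * F r - (m:ℝ) * (snk' κ r / snk κ r) * deriv F r)
    (hFpos : ∀ r > 0, 0 < F r) (hF'pos : ∀ r > 0, 0 < deriv F r)
    {R : ℝ} (hR : 0 < R) :
    ∃ B, 0 ≤ B ∧ ∀ r ∈ Ioc (0:ℝ) R, deriv F r ≤ B := by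
  obtain ⟨r₁, hr₁, hs⟩ := F_slope hF0 hF'0
  set r₀ : ℝ := min (r₁/2) R with hr₀def
  have hr₀ : 0 < r₀ := lt_min (by linarith) hR
  set B₁ : ℝ := 4 * (2 * Real.cosh (Real.sqrt (-κ) * r₀)) ^ m with hB₁def
  have hB₁ : 0 ≤ B₁ := by
    have := Real.one_le_cosh (Real.sqrt (-κ) * r₀); positivity
  have near : ∀ r ∈ Ioc (0:ℝ) r₀, deriv F r ≤ B₁ := by
    intro r hr
    obtain ⟨hr0, hrr₀⟩ := hr
    have h2r : r < 2*r := by linarith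
    obtain ⟨ξ, hξ, hslope⟩ := exists_hasDerivAt_eq_slope F (deriv F) h2r
      (hFc.mono (fun t ht => le_trans hr0.le ht.1))
      (fun t ht => hFd hF2 (lt_trans hr0 ht.1))
    have hξ0 : 0 < ξ := lt_trans hr0 hξ.1
    have h2rr₁ : 2*r ≤ r₁ := by
      have : r₀ ≤ r₁/2 := min_le_left _ _
      linarith
    have hF2r : F (2*r) ≤ 2*(2*r) := (hs (2*r) ⟨by linarith, h2rr₁⟩).2
    have hFr : 0 ≤ F r := (hFpos r hr0).le
    have hderξ : deriv F ξ ≤ 4 := by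
      rw [hslope, div_le_iff₀ (by linarith : (0:ℝ) < 2*r - r)]
      linarith
    have hv := v_mono hκ hm hF2 hODE' hFpos hr0 hξ.1.le
    have hsnk2 : snk κ ξ ≤ 2 * Real.cosh (Real.sqrt (-κ) * r₀) * snk κ r := by
      have h1 : snk κ ξ ≤ snk κ (2*r) := snk_mono hκ hξ.2.le
      rw [snk_doubling hκ r] at h1
      have hcosh : Real.cosh (Real.sqrt (-κ) * r) ≤ Real.cosh (Real.sqrt (-κ) * r₀) := by
        rw [Real.cosh_le_cosh]
        have ha := Real.sqrt_nonneg (-κ)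
        rw [abs_of_nonneg (by positivity), abs_of_nonneg (by positivity)]
        exact mul_le_mul_of_nonneg_left hrr₀ ha
      have hsr : 0 ≤ snk κ r := (snk_pos hκ hr0).le
      nlinarith
    have hsnkr : 0 < snk κ r := snk_pos hκ hr0
    have hsnkξ : 0 ≤ snk κ ξ := (snk_pos hκ hξ0).le
    have hchain : deriv F r * snk κ r ^ m ≤ B₁ * snk κ r ^ m := by
      have h1 : snk κ ξ ^ m ≤ (2 * Real.cosh (Real.sqrt (-κ) * r₀) * snk κ r) ^ m :=
        pow_le_pow_left₀ hsnkξ hsnk2 m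
      have h2 : deriv F ξ * snk κ ξ ^ m ≤ 4 * snk κ ξ ^ m :=
        mul_le_mul_of_nonneg_right hderξ (by positivity)
      have h3 : (4:ℝ) * snk κ ξ ^ m ≤ 4 * ((2 * Real.cosh (Real.sqrt (-κ) * r₀)) ^ m * snk κ r ^ m) := by
        rw [← mul_pow]
        exact mul_le_mul_of_nonneg_left h1 (by norm_num)
      calc deriv F r * snk κ r ^ m ≤ deriv F ξ * snk κ ξ ^ m := hv
        _ ≤ 4 * snk κ ξ ^ m := h2
        _ ≤ 4 * ((2 * Real.cosh (Real.sqrt (-κ) * r₀)) ^ m * snk κ r ^ m) := h3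
        _ = B₁ * snk κ r ^ m := by rw [hB₁def]; ring
    exact le_of_mul_le_mul_right hchain (pow_pos hsnkr m)
  obtain ⟨B₂, hB₂⟩ := IsCompact.exists_bound_of_continuousOn isCompact_Icc
    ((hF'cont hF2).mono (fun t (ht : t ∈ Icc r₀ R) => lt_of_lt_of_le hr₀ ht.1))
  refine ⟨max B₁ B₂, le_trans hB₁ (le_max_left _ _), fun r hr => ?_⟩
  rcases le_or_gt r r₀ with h | h
  · exact le_trans (near r ⟨hr.1, h⟩) (le_max_left _ _)
  · have := hB₂ r ⟨h.le, hr.2⟩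
    rw [Real.norm_eq_abs, abs_le] at this
    exact le_trans this.2 (le_max_right _ _)

lemma F_bounds {F : ℝ → ℝ}
    (hFc : ContinuousOn F (Ici 0))
    (hF0 : F 0 = 0) (hF'0 : HasDerivWithinAt F 1 (Ici 0) 0)
    (hFpos : ∀ r > 0, 0 < F r)
    {R : ℝ} (hR : 0 < R) :
    ∃ CF D : ℝ, 0 ≤ CF ∧ 0 ≤ D ∧ ∀ r ∈ Ioc (0:ℝ) R, F r ≤ CF * r ∧ r ≤ D * F r := by
  obtain ⟨r₁, hr₁, hs⟩ := F_slope hF0 hF'0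
  set r₀ : ℝ := min r₁ R with hr₀def
  have hr₀ : 0 < r₀ := lt_min hr₁ hR
  have hsub : Icc r₀ R ⊆ Ici 0 := fun t ht => le_trans hr₀.le ht.1
  obtain ⟨MF, hMF⟩ := IsCompact.exists_bound_of_continuousOn isCompact_Icc (hFc.mono hsub)
  obtain ⟨z, hz, hzmin⟩ := IsCompact.exists_isMinOn isCompact_Icc
    (nonempty_Icc.2 (min_le_right _ _)) (hFc.mono hsub)
  have hc₀ : 0 < F z := hFpos z (lt_of_lt_of_le hr₀ hz.1)
  refine ⟨max 2 (MF/r₀), max 2 (R / F z), le_max_of_le_left (by norm_num),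
    le_max_of_le_left (by norm_num), fun r hr => ?_⟩
  rcases le_or_gt r r₀ with h | h
  · have h1 := hs r ⟨hr.1, le_trans h (min_le_left _ _)⟩
    constructor
    · calc F r ≤ 2 * r := h1.2
        _ ≤ max 2 (MF/r₀) * r := mul_le_mul_of_nonneg_right (le_max_left _ _) hr.1.le
    · calc r = 2 * (r/2) := by ring
        _ ≤ 2 * F r := by linarith [h1.1]
        _ ≤ max 2 (R / F z) * F r :=
            mul_le_mul_of_nonneg_right (le_max_left _ _) (hFpos r hr.1).le
  · have hrIcc : r ∈ Icc r₀ R := ⟨h.le, hr.2⟩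
    have hFrb : F r ≤ MF := by
      have := hMF r hrIcc; rw [Real.norm_eq_abs, abs_le] at this; exact this.2
    have hMF0 : 0 ≤ MF := le_trans (norm_nonneg _) (hMF r hrIcc)
    constructor
    · have h1 : F r ≤ (MF / r₀) * r := by
        rw [div_mul_eq_mul_div, le_div_iff₀ hr₀]
        nlinarith
      calc F r ≤ (MF / r₀) * r := h1
        _ ≤ max 2 (MF/r₀) * r := mul_le_mul_of_nonneg_right (le_max_right _ _) hr.1.le
    · have h2 : F z ≤ F r := hzmin hrIcc
      have h1 : r ≤ (R / F z) * F r := by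
        rw [div_mul_eq_mul_div, le_div_iff₀ hc₀]
        nlinarith [hr.2]
      calc r ≤ (R / F z) * F r := h1
        _ ≤ max 2 (R / F z) * F r :=
            mul_le_mul_of_nonneg_right (le_max_right _ _) (hFpos r hr.1).le

lemma snk_nonneg {κ : ℝ} (hκ : κ ≤ 0) {t : ℝ} (ht : 0 ≤ t) : 0 ≤ snk κ t :=
  le_trans ht (le_snk hκ ht)

lemma snk_cont {κ : ℝ} (hκ : κ ≤ 0) : Continuous (snk κ) :=
  continuous_iff_continuousAt.2 (fun t => (hasDerivAt_snk κ t hκ).continuousAt)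

set_option maxHeartbeats 1000000 in
lemma key {κ : ℝ} (hκ : κ ≤ 0) {n : ℕ} (hn : 2 ≤ n) {F : ℝ → ℝ}
    (hFc : ContinuousOn F (Ici 0))
    (hF2 : ContDiffOn ℝ 2 F (Ioi 0))
    (hF0 : F 0 = 0)
    (hF'0 : HasDerivWithinAt F 1 (Ici 0) 0)
    (hODE : ∀ r > 0, deriv (deriv F) r
      + ((n : ℝ) - 1) * (deriv (snk κ) r / snk κ r) * deriv F r
      - (((n : ℝ) - 1) / (snk κ r) ^ 2) * F r = 0)
    (hFpos : ∀ r > 0, 0 < F r) (hF'pos : ∀ r > 0, 0 < deriv F r)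
    {R : ℝ} (hR : 0 < R)
    (φ : ℝ → ℝ) (hφc : ContinuousOn φ (Icc 0 R)) (hφ0 : φ 0 = 0)
    (hφd : ∀ r ∈ Ioo (0:ℝ) R, HasDerivAt φ (deriv φ r) r)
    (hφ'c : ContinuousOn (deriv φ) (Ioo 0 R))
    {C : ℝ} (hC0 : 0 ≤ C)
    (hC : ∀ r ∈ Ioo (0:ℝ) R, |φ r| ≤ C * r ∧ |deriv φ r| ≤ C) :
    (deriv F R / F R * ((φ R) ^ 2 * snk κ R ^ (n - 1)) ≤
      ∫ r in (0:ℝ)..R,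
        ((deriv φ r) ^ 2 + ((n : ℝ) - 1) * (φ r) ^ 2 / (snk κ r) ^ 2) * snk κ r ^ (n - 1)) ∧
    ((∀ r ∈ Ioo (0:ℝ) R, deriv φ r * F r = φ r * deriv F r) →
      (∫ r in (0:ℝ)..R,
        ((deriv φ r) ^ 2 + ((n : ℝ) - 1) * (φ r) ^ 2 / (snk κ r) ^ 2) * snk κ r ^ (n - 1))
      = deriv F R / F R * ((φ R) ^ 2 * snk κ R ^ (n - 1))) := by
  set m : ℕ := n - 1 with hmdef
  have hm : 1 ≤ m := by omega
  have hmn : ((n:ℝ) - 1) = (m:ℝ) := by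
    rw [hmdef, Nat.cast_sub (by omega)]; norm_num
  have hODE' : ∀ r > 0, deriv (deriv F) r
      = (m:ℝ) / snk κ r ^ 2 * F r - (m:ℝ) * (snk' κ r / snk κ r) * deriv F r := by
    intro r hr
    have h := hODE r hr
    rw [(hasDerivAt_snk κ r hκ).deriv] at h
    rw [← hmn]; linarith
  obtain ⟨B, hB0, hB⟩ := derivF_bound hκ hm hFc hF2 hF0 hF'0 hODE' hFpos hF'pos hR
  obtain ⟨CF, D, hCF0, hD0, hFB⟩ := F_bounds hFc hF0 hF'0 hFpos hR
  have hsR : 0 < snk κ R := snk_pos hκ hR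
  set f : ℝ → ℝ := fun r =>
    ((deriv φ r) ^ 2 + ((n : ℝ) - 1) * (φ r) ^ 2 / (snk κ r) ^ 2) * snk κ r ^ m with hfdef
  set g : ℝ → ℝ := fun r => (2 * (deriv F r / F r) * φ r * deriv φ r
    + (((n:ℝ)-1)/(snk κ r)^2 - (deriv F r / F r)^2) * (φ r)^2) * snk κ r ^ m with hgdef
  set G : ℝ → ℝ := fun r =>
    if r = 0 then 0 else deriv F r / F r * (φ r)^2 * snk κ r ^ m with hGdef
  -- pointwise inequality
  have hfg : ∀ r, 0 ≤ r → g r ≤ f r := by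
    intro r hr
    have hsm : 0 ≤ snk κ r ^ m := pow_nonneg (snk_nonneg hκ hr) m
    have hid : f r - g r = (deriv φ r - deriv F r / F r * φ r)^2 * snk κ r ^ m := by
      simp only [hfdef, hgdef]; ring
    nlinarith [sq_nonneg (deriv φ r - deriv F r / F r * φ r)]
  -- per-point bounds on Ioo
  have hn1 : (0:ℝ) ≤ (n:ℝ) - 1 := by rw [hmn]; positivity
  set A : ℝ := B * C * D with hAdef
  have hA0 : 0 ≤ A := by positivity
  set Mf : ℝ := (C^2 + ((n:ℝ)-1)*C^2) * snk κ R ^ m with hMfdef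
  set Mg : ℝ := (2*A*C + ((n:ℝ)-1)*C^2 + A^2) * snk κ R ^ m with hMgdef
  have hbounds : ∀ r ∈ Ioo (0:ℝ) R, |f r| ≤ Mf ∧ |g r| ≤ Mg := by
    intro r hr
    have hr0 : 0 < r := hr.1
    have hFr := hFpos r hr0
    have hF'r := hF'pos r hr0
    have hφr := (hC r hr).1
    have hφ'r := (hC r hr).2
    have hBr := hB r ⟨hr0, hr.2.le⟩
    have hDr := (hFB r ⟨hr0, hr.2.le⟩).2
    have hsr : 0 < snk κ r := snk_pos hκ hr0
    have hsrle : snk κ r ≤ snk κ R := snk_mono hκ hr.2.le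
    have hsm : snk κ r ^ m ≤ snk κ R ^ m := pow_le_pow_left₀ hsr.le hsrle m
    have hsm0 : 0 ≤ snk κ r ^ m := pow_nonneg hsr.le m
    have hrs : r ≤ snk κ r := le_snk hκ hr0.le
    -- |φ r| ≤ C * snk κ r, so φ² / s² ≤ C²
    have hφs : (φ r)^2 / (snk κ r)^2 ≤ C^2 := by
      rw [div_le_iff₀ (pow_pos hsr 2)]
      have h1 : |φ r| ≤ C * snk κ r := le_trans hφr (by nlinarith)
      have h2 := mul_self_le_mul_self (abs_nonneg (φ r)) h1
      nlinarith [sq_abs (φ r)]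
    have hφs0 : 0 ≤ (φ r)^2 / (snk κ r)^2 := by positivity
    have hφ'sq : (deriv φ r)^2 ≤ C^2 := by
      nlinarith [sq_abs (deriv φ r), abs_nonneg (deriv φ r)]
    set X : ℝ := deriv F r / F r * φ r with hXdef
    have hqφ : |X| ≤ A := by
      rw [hXdef, hAdef, abs_mul, abs_of_pos (div_pos hF'r hFr), div_mul_eq_mul_div,
        div_le_iff₀ hFr]
      have h2 : |φ r| ≤ C * (D * F r) :=
        le_trans hφr (mul_le_mul_of_nonneg_left hDr hC0)
      nlinarith [abs_nonneg (φ r)]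
    constructor
    · have hf0 : 0 ≤ f r := by
        rw [hfdef]
        have h0 : 0 ≤ ((n:ℝ)-1) * ((φ r)^2/(snk κ r)^2) := mul_nonneg hn1 hφs0
        have h0' : 0 ≤ (deriv φ r)^2 + ((n:ℝ)-1) * (φ r)^2/(snk κ r)^2 := by
          have heq : ((n:ℝ)-1) * (φ r)^2/(snk κ r)^2 = ((n:ℝ)-1) * ((φ r)^2/(snk κ r)^2) := by
            ring
          rw [heq]
          exact add_nonneg (sq_nonneg _) h0
        exact mul_nonneg h0' hsm0
      rw [abs_of_nonneg hf0, hfdef, hMfdef]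
      have h1 : (deriv φ r)^2 + ((n:ℝ)-1) * (φ r)^2/(snk κ r)^2 ≤ C^2 + ((n:ℝ)-1)*C^2 := by
        have h2 : ((n:ℝ)-1) * ((φ r)^2/(snk κ r)^2) ≤ ((n:ℝ)-1) * C^2 :=
          mul_le_mul_of_nonneg_left hφs hn1
        have h3 : ((n:ℝ)-1) * (φ r)^2/(snk κ r)^2 = ((n:ℝ)-1) * ((φ r)^2/(snk κ r)^2) := by
          ring
        linarith [h3 ▸ h2]
      apply mul_le_mul h1 hsm hsm0
      linarith [mul_nonneg hn1 (sq_nonneg C), sq_nonneg C]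
    · have hgr : g r = (2*X*(deriv φ r)
          + (((n:ℝ)-1)*((φ r)^2/(snk κ r)^2) - X^2)) * snk κ r ^ m := by
        rw [hgdef, hXdef]; ring
      rw [hgr, abs_mul, abs_of_nonneg hsm0, hMgdef]
      have hXφ' : |X * deriv φ r| ≤ A * C := by
        rw [abs_mul]
        exact mul_le_mul hqφ hφ'r (abs_nonneg _) hA0
      have hX2 : X^2 ≤ A^2 := by nlinarith [sq_abs X, abs_nonneg X]
      have hmid : ((n:ℝ)-1)*((φ r)^2/(snk κ r)^2) ≤ ((n:ℝ)-1)*C^2 :=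
        mul_le_mul_of_nonneg_left hφs hn1
      have hmid0 : 0 ≤ ((n:ℝ)-1)*((φ r)^2/(snk κ r)^2) := mul_nonneg hn1 hφs0
      have habs : |2*X*(deriv φ r) + (((n:ℝ)-1)*((φ r)^2/(snk κ r)^2) - X^2)|
          ≤ 2*A*C + ((n:ℝ)-1)*C^2 + A^2 := by
        rw [abs_le]
        have h4 := abs_le.1 hXφ'
        constructor
        · linarith [h4.1, hmid0, hX2]
        · linarith [h4.2, hmid, sq_nonneg X]
      apply mul_le_mul habs hsm hsm0
      linarith [mul_nonneg hA0 hC0, mul_nonneg hn1 (sq_nonneg C), sq_nonneg A]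
  -- continuity of f and g on Ioo
  have hsnkC : Continuous (snk κ) := snk_cont hκ
  have hsne : ∀ r ∈ Ioo (0:ℝ) R, snk κ r ≠ 0 := fun r hr => (snk_pos hκ hr.1).ne'
  have hFne : ∀ r ∈ Ioo (0:ℝ) R, F r ≠ 0 := fun r hr => (hFpos r hr.1).ne'
  have hφcIoo : ContinuousOn φ (Ioo 0 R) := hφc.mono Ioo_subset_Icc_self
  have hFcIoo : ContinuousOn F (Ioo 0 R) := hFc.mono (fun t ht => ht.1.le)
  have hF'cIoo : ContinuousOn (deriv F) (Ioo 0 R) := (hF'cont hF2).mono (fun t ht => ht.1)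
  have hfcont : ContinuousOn f (Ioo 0 R) := by
    apply ContinuousOn.mul ?_ ((hsnkC.continuousOn).pow m)
    apply ContinuousOn.add (hφ'c.pow 2)
    exact (continuousOn_const.mul (hφcIoo.pow 2)).div ((hsnkC.continuousOn).pow 2)
      (fun r hr => pow_ne_zero 2 (hsne r hr))
  have hgcont : ContinuousOn g (Ioo 0 R) := by
    apply ContinuousOn.mul ?_ ((hsnkC.continuousOn).pow m)
    apply ContinuousOn.add
    · exact ((continuousOn_const.mul (hF'cIoo.div hFcIoo hFne)).mul hφcIoo).mul hφ'c
    · exact ((continuousOn_const.div ((hsnkC.continuousOn).pow 2)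
        (fun r hr => pow_ne_zero 2 (hsne r hr))).sub
        ((hF'cIoo.div hFcIoo hFne).pow 2)).mul (hφcIoo.pow 2)
  -- integrability
  have hint : ∀ (h : ℝ → ℝ), ContinuousOn h (Ioo 0 R) → ∀ M : ℝ,
      (∀ r ∈ Ioo (0:ℝ) R, |h r| ≤ M) → IntervalIntegrable h volume 0 R := by
    intro h hc M hM
    rw [intervalIntegrable_iff_integrableOn_Ioo_of_le hR.le]
    refine ⟨hc.aestronglyMeasurable measurableSet_Ioo, ?_⟩
    apply MeasureTheory.HasFiniteIntegral.restrict_of_bounded (C := M) measure_Ioo_lt_top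
    filter_upwards [MeasureTheory.ae_restrict_mem measurableSet_Ioo] with x hx
    rw [Real.norm_eq_abs]; exact hM x hx
  have hfint := hint f hfcont Mf (fun r hr => (hbounds r hr).1)
  have hgint := hint g hgcont Mg (fun r hr => (hbounds r hr).2)
  -- derivative of G on Ioo
  have hGd : ∀ r ∈ Ioo (0:ℝ) R, HasDerivAt G (g r) r := by
    intro r hr
    have hr0 : 0 < r := hr.1
    have hFr := hFpos r hr0
    have hsr := snk_pos hκ hr0
    have hq := (hFd2 hF2 hr0).div (hFd hF2 hr0) hFr.ne'
    have hφ2 := (hφd r hr).pow 2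
    have hsmD := (hasDerivAt_snk κ r hκ).pow m
    have hmain := (hq.mul hφ2).mul hsmD
    have hval : ((deriv (deriv F) r * F r - deriv F r * deriv F r) / (F r)^2 * (φ r)^2
        + deriv F r / F r * ((2:ℕ) * φ r ^ (2-1) * deriv φ r)) * snk κ r ^ m
        + (deriv F r / F r * (φ r)^2) * ((m:ℕ) * snk κ r ^ (m-1) * snk' κ r) = g r := by
      have hpow : snk κ r ^ (m-1) = snk κ r ^ m / snk κ r := by
        rw [eq_div_iff hsr.ne', ← pow_succ]; congr 1; omega
      rw [hODE' r hr0, hpow, hgdef, hmn]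
      field_simp
      ring
    simp only [Pi.mul_apply, Pi.div_apply, Pi.pow_apply] at hmain
    rw [hval] at hmain
    apply hmain.congr_of_eventuallyEq
    filter_upwards [Ioi_mem_nhds hr0] with t ht
    simp only [hGdef]; rw [if_neg (ne_of_gt ht)]; rfl
  -- values of G
  have hG0 : G 0 = 0 := by simp [hGdef]
  have hGR : G R = deriv F R / F R * (φ R)^2 * snk κ R ^ m := by
    simp only [hGdef]; rw [if_neg (ne_of_gt hR)]
  -- continuity of G on Icc
  have hGcont : ContinuousOn G (Icc 0 R) := by
    intro x hx
    rcases eq_or_lt_of_le hx.1 with h0 | hx0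
    · -- continuity at 0
      subst h0
      set K : ℝ := B * (C * (C * D)) * snk κ R ^ m with hKdef
      show Tendsto G (𝓝[Icc 0 R] 0) (𝓝 (G 0))
      rw [hG0]
      apply squeeze_zero' (g := fun t => K * t)
      · filter_upwards [self_mem_nhdsWithin] with t ht
        rcases eq_or_lt_of_le ht.1 with h | h
        · rw [← h]; simp [hGdef]
        · have hFt := hFpos t h
          have hF't := hF'pos t h
          have hst := snk_pos hκ h
          simp only [hGdef]; rw [if_neg (ne_of_gt h)]
          positivity
      · filter_upwards [self_mem_nhdsWithin,
          mem_nhdsWithin_of_mem_nhds (Iio_mem_nhds hR)] with t ht htR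
        rcases eq_or_lt_of_le ht.1 with h | h
        · rw [← h]; simp [hGdef]
        · have hFt := hFpos t h
          have hF't := hF'pos t h
          have hst := snk_pos hκ h
          have htIoo : t ∈ Ioo (0:ℝ) R := ⟨h, htR⟩
          have hφt := (hC t htIoo).1
          have hDt := (hFB t ⟨h, htR.le⟩).2
          have hBt := hB t ⟨h, htR.le⟩
          have hsmle : snk κ t ^ m ≤ snk κ R ^ m :=
            pow_le_pow_left₀ hst.le (snk_mono hκ htR.le) m
          have h2' : |φ t| ≤ C * (D * F t) :=
            le_trans hφt (mul_le_mul_of_nonneg_left hDt hC0)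
          have h1 : (φ t)^2 ≤ (C*t) * (C*(D*F t)) := by
            have hprod := mul_le_mul hφt h2' (abs_nonneg _) (by positivity)
            nlinarith [sq_abs (φ t)]
          have hqnn : 0 ≤ deriv F t / F t := (div_pos hF't hFt).le
          have hq1 : deriv F t / F t * (φ t)^2 ≤ deriv F t / F t * ((C*t) * (C*(D*F t))) :=
            mul_le_mul_of_nonneg_left h1 hqnn
          have hq2 : deriv F t / F t * ((C*t) * (C*(D*F t))) = deriv F t * (C*t) * (C*D) := by
            field_simp
          have hq3 : deriv F t * (C*t) * (C*D) ≤ B * (C * (C * D)) * t := by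
            nlinarith [mul_nonneg hC0 h.le, mul_nonneg hC0 hD0]
          have hq4 : deriv F t / F t * (φ t)^2 ≤ B * (C * (C * D)) * t := by
            rw [hq2] at hq1; linarith
          simp only [hGdef]; rw [if_neg (ne_of_gt h)]
          calc deriv F t / F t * (φ t)^2 * snk κ t ^ m
              ≤ (B * (C * (C * D)) * t) * snk κ R ^ m := by
                apply mul_le_mul hq4 hsmle (pow_nonneg hst.le m)
                positivity
            _ = K * t := by rw [hKdef]; ring
      · have : Tendsto (fun t : ℝ => K * t) (𝓝 0) (𝓝 0) := by
          simpa using (continuous_mul_left K).tendsto (0:ℝ)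
        exact this.mono_left nhdsWithin_le_nhds
    · -- continuity at x > 0
      have hcw : ContinuousWithinAt
          (fun t => deriv F t / F t * (φ t)^2 * snk κ t ^ m) (Icc 0 R) x := by
        apply ContinuousWithinAt.mul
        apply ContinuousWithinAt.mul
        · exact (((hF'cont hF2).continuousAt (Ioi_mem_nhds hx0)).continuousWithinAt).div
            ((hFc x hx.1).mono Icc_subset_Ici_self) (hFpos x hx0).ne'
        · exact (hφc x hx).pow 2
        · exact (hsnkC.continuousAt.continuousWithinAt).pow m
      apply hcw.congr_of_eventuallyEq ?_ ?_
      · filter_upwards [mem_nhdsWithin_of_mem_nhds (compl_singleton_mem_nhds hx0.ne')] with t ht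
        simp only [hGdef]; rw [if_neg (by simpa using ht)]
      · simp only [hGdef]; rw [if_neg (ne_of_gt hx0)]
  -- FTC
  have hftc : ∫ r in (0:ℝ)..R, g r = G R - G 0 :=
    intervalIntegral.integral_eq_sub_of_hasDerivAt_of_le hR.le hGcont hGd hgint
  have hmono : (∫ r in (0:ℝ)..R, g r) ≤ ∫ r in (0:ℝ)..R, f r :=
    intervalIntegral.integral_mono_on hR.le hgint hfint (fun x hx => hfg x hx.1)
  constructor
  · have hgoal : deriv F R / F R * ((φ R)^2 * snk κ R ^ m) = G R := by rw [hGR]; ring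
    rw [hgoal]
    linarith [hftc, hmono, hG0]
  · intro hprop
    have heqn : EqOn f g (Ioo 0 R) := by
      intro r hr
      have hFr := hFpos r hr.1
      have hzero : deriv φ r - deriv F r / F r * φ r = 0 := by
        have h := hprop r hr
        field_simp
        linarith
      have hid : f r - g r = (deriv φ r - deriv F r / F r * φ r)^2 * snk κ r ^ m := by
        simp only [hfdef, hgdef]; ring
      rw [hzero] at hid
      simp only [ne_eq, OfNat.ofNat_ne_zero, not_false_eq_true, zero_pow, zero_mul] at hid
      linarith
    have hfg_int : (∫ r in (0:ℝ)..R, f r) = ∫ r in (0:ℝ)..R, g r := by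
      rw [intervalIntegral.integral_of_le hR.le, intervalIntegral.integral_of_le hR.le,
        MeasureTheory.integral_Ioc_eq_integral_Ioo, MeasureTheory.integral_Ioc_eq_integral_Ioo]
      exact MeasureTheory.setIntegral_congr_fun measurableSet_Ioo heqn
    rw [hfg_int, hftc, hG0, hGR]
    ring
/-- One-dimensional variational characterization of `σ₁` of the geodesic ball: for every
`C¹` function `φ : [0,R] → ℝ` with `φ(0) = 0` and `φ(R) ≠ 0`,
`∫₀^R (φ'² + (n-1)φ²/sn_κ²) sn_κ^{n-1} dr ≥ (F'(R)/F(R)) φ(R)² sn_κ(R)^{n-1}`,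
with equality when `φ = F`. -/
theorem steklov_ball_variational
    (κ : ℝ) (hκ : κ ≤ 0) (n : ℕ) (hn : 2 ≤ n) (F : ℝ → ℝ)
    (hFc : ContinuousOn F (Ici 0))
    (hF2 : ContDiffOn ℝ 2 F (Ioi 0))
    (hF0 : F 0 = 0)
    (hF'0 : HasDerivWithinAt F 1 (Ici 0) 0)
    (hODE : ∀ r > 0, deriv (deriv F) r
      + ((n : ℝ) - 1) * (deriv (snk κ) r / snk κ r) * deriv F r
      - (((n : ℝ) - 1) / (snk κ r) ^ 2) * F r = 0)
    (hFpos : ∀ r > 0, 0 < F r) (hF'pos : ∀ r > 0, 0 < deriv F r) :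
    ∀ R > 0,
      (∀ φ : ℝ → ℝ, ContDiffOn ℝ 1 φ (Icc 0 R) → φ 0 = 0 → φ R ≠ 0 →
        deriv F R / F R * ((φ R) ^ 2 * snk κ R ^ (n - 1)) ≤
          ∫ r in (0 : ℝ)..R,
            ((deriv φ r) ^ 2 + ((n : ℝ) - 1) * (φ r) ^ 2 / (snk κ r) ^ 2) * snk κ r ^ (n - 1)) ∧
      (∫ r in (0 : ℝ)..R,
          ((deriv F r) ^ 2 + ((n : ℝ) - 1) * (F r) ^ 2 / (snk κ r) ^ 2) * snk κ r ^ (n - 1)) =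
        deriv F R / F R * ((F R) ^ 2 * snk κ R ^ (n - 1)) := by
  intro R hR
  constructor
  · intro φ hφ1 hφ0 hφR
    -- extract C¹ data
    have hu : UniqueDiffOn ℝ (Icc (0:ℝ) R) := uniqueDiffOn_Icc hR
    have hdw : ∀ x ∈ Icc (0:ℝ) R, HasDerivWithinAt φ (derivWithin φ (Icc 0 R) x) (Icc 0 R) x :=
      fun x hx => ((hφ1.differentiableOn (by norm_num)) x hx).hasDerivWithinAt
    have hdwc : ContinuousOn (derivWithin φ (Icc 0 R)) (Icc 0 R) :=
      hφ1.continuousOn_derivWithin hu le_rfl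
    obtain ⟨C₁, hC₁⟩ := IsCompact.exists_bound_of_continuousOn isCompact_Icc hdwc
    have hC₁0 : 0 ≤ C₁ := le_trans (norm_nonneg _) (hC₁ 0 (left_mem_Icc.2 hR.le))
    have hdat : ∀ r ∈ Ioo (0:ℝ) R, DifferentiableAt ℝ φ r := fun r hr =>
      ((hφ1.differentiableOn (by norm_num)) r (Ioo_subset_Icc_self hr)).differentiableAt
        (Icc_mem_nhds hr.1 hr.2)
    have hderiv_eq : ∀ r ∈ Ioo (0:ℝ) R, derivWithin φ (Icc 0 R) r = deriv φ r := fun r hr =>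
      (hdat r hr).derivWithin (hu r (Ioo_subset_Icc_self hr))
    have hφd : ∀ r ∈ Ioo (0:ℝ) R, HasDerivAt φ (deriv φ r) r :=
      fun r hr => (hdat r hr).hasDerivAt
    have hφ'c : ContinuousOn (deriv φ) (Ioo 0 R) :=
      (hdwc.mono Ioo_subset_Icc_self).congr (fun r hr => (hderiv_eq r hr).symm)
    have hCb : ∀ r ∈ Ioo (0:ℝ) R, |φ r| ≤ C₁ * r ∧ |deriv φ r| ≤ C₁ := by
      intro r hr
      constructor
      · have := Convex.norm_image_sub_le_of_norm_hasDerivWithin_le hdw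
          (fun x hx => hC₁ x hx) (convex_Icc 0 R) (left_mem_Icc.2 hR.le)
          (Ioo_subset_Icc_self hr)
        rw [hφ0, sub_zero, sub_zero, Real.norm_eq_abs, Real.norm_eq_abs,
          abs_of_pos hr.1] at this
        exact this
      · rw [← hderiv_eq r hr]
        have := hC₁ r (Ioo_subset_Icc_self hr)
        rwa [Real.norm_eq_abs] at this
    exact (key hκ hn hFc hF2 hF0 hF'0 hODE hFpos hF'pos hR φ
      hφ1.continuousOn hφ0 hφd hφ'c hC₁0 hCb).1
  · -- equality case: φ = F
    set m : ℕ := n - 1 with hmdef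
    have hm : 1 ≤ m := by omega
    have hmn : ((n:ℝ) - 1) = (m:ℝ) := by
      rw [hmdef, Nat.cast_sub (by omega)]; norm_num
    have hODE' : ∀ r > 0, deriv (deriv F) r
        = (m:ℝ) / snk κ r ^ 2 * F r - (m:ℝ) * (snk' κ r / snk κ r) * deriv F r := by
      intro r hr
      have h := hODE r hr
      rw [(hasDerivAt_snk κ r hκ).deriv] at h
      rw [← hmn]; linarith
    obtain ⟨B, hB0, hB⟩ := derivF_bound hκ hm hFc hF2 hF0 hF'0 hODE' hFpos hF'pos hR
    obtain ⟨CF, D, hCF0, hD0, hFB⟩ := F_bounds hFc hF0 hF'0 hFpos hR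
    set C : ℝ := max CF B with hCdef
    have hC0 : 0 ≤ C := le_trans hCF0 (le_max_left _ _)
    have hCb : ∀ r ∈ Ioo (0:ℝ) R, |F r| ≤ C * r ∧ |deriv F r| ≤ C := by
      intro r hr
      have h1 := (hFB r ⟨hr.1, hr.2.le⟩).1
      have h2 := hB r ⟨hr.1, hr.2.le⟩
      constructor
      · rw [abs_of_pos (hFpos r hr.1)]
        calc F r ≤ CF * r := h1
          _ ≤ C * r := mul_le_mul_of_nonneg_right (le_max_left _ _) hr.1.le
      · rw [abs_of_pos (hF'pos r hr.1)]
        exact le_trans h2 (le_max_right _ _)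
    exact (key hκ hn hFc hF2 hF0 hF'0 hODE hFpos hF'pos hR F
      (hFc.mono Icc_subset_Ici_self) hF0 (fun r hr => hFd hF2 hr.1)
      ((hF'cont hF2).mono (fun t ht => ht.1)) hC0 hCb).2
      (fun r hr => mul_comm (deriv F r) (F r))
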